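/- Every semi-resolving set in a projective plane of order q has size at least 2q − 1. -/

import Mathlib

open Configuration

variable (P L : Type*) [Membership P L]

/-- The incidence graph of an incidence structure: vertices are points and lines,
with a point adjacent to a line iff it lies on it. -/
def incGraph : SimpleGraph (P ⊕ L) where
  Adj x y := match x, y with
    | .inl p, .inr l => p ∈ l
    | .inr l, .inl p => p ∈ l
    | _, _ => False
  symm := ⟨by rintro (p | l) (p' | l') h <;> simp_all⟩
  loopless := ⟨by rintro (p | l) h <;> simp_all⟩

/-- A set of points is a semi-resolving set if the ordered distance lists (in the
incidence graph) to its elements distinguish all lines. -/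
def IsSemiResolvingSet (S : Set P) : Prop :=
  ∀ l m : L,
    (∀ p ∈ S, (incGraph P L).dist (Sum.inr l) (Sum.inl p) =
      (incGraph P L).dist (Sum.inr m) (Sum.inl p)) → l = m

/-- A double blocking set: every line contains at least two of its points. -/
def IsDoubleBlocking (B : Set P) : Prop :=
  ∀ l : L, 2 ≤ ({p ∈ B | p ∈ l}).ncard

/-- τ₂ : the minimum size of a double blocking set. -/
noncomputable def tau2 : ℕ :=
  sInf {n | ∃ B : Finset P, B.card = n ∧ IsDoubleBlocking P L ↑B}

/-- μ_S : the minimum size of a semi-resolving set. -/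
noncomputable def muS : ℕ :=
  sInf {n | ∃ S : Finset P, S.card = n ∧ IsSemiResolvingSet P L ↑S}

/-- The "side" of a vertex of the incidence graph, as an element of `ZMod 2`. -/
private def side {P L : Type*} : P ⊕ L → ZMod 2 := Sum.elim (fun _ => 0) (fun _ => 1)

private lemma side_add_self {P L : Type*} (z : P ⊕ L) : side z + side z = 0 := by
  obtain (a | a) := z <;> simp [side] <;> decide

private lemma walk_parity {P L : Type*} [Membership P L] {x y : P ⊕ L}
    (w : (incGraph P L).Walk x y) : (w.length : ZMod 2) = side x + side y := by
  induction w with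
  | nil =>
    simp only [SimpleGraph.Walk.length_nil, Nat.cast_zero]
    exact (side_add_self _).symm
  | @cons a b c h w ih =>
    have hab : side a + side b = 1 := by
      obtain (a | a) := a <;> obtain (b | b) := b <;>
        simp_all [incGraph, side] <;> rfl
    simp only [SimpleGraph.Walk.length_cons, Nat.cast_add, Nat.cast_one, ih]
    linear_combination -hab + side_add_self b

open scoped Classical in
private lemma incGraph_dist_eq {P L : Type*} [Membership P L] [ProjectivePlane P L]
    [Finite P] [Finite L] (l : L) (p : P) :
    (incGraph P L).dist (Sum.inr l) (Sum.inl p) = if p ∈ l then 1 else 3 := by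
  by_cases hp : p ∈ l
  · rw [if_pos hp]
    rw [SimpleGraph.dist_eq_one_iff_adj]
    exact hp
  · rw [if_neg hp]
    -- find a point on l
    have hpc : 0 < pointCount P l := by
      rw [ProjectivePlane.pointCount_eq P l]; omega
    have hne : Nonempty {q : P // q ∈ l} := by
      rw [pointCount] at hpc
      exact Nat.card_pos_iff.mp hpc |>.1
    obtain ⟨r, hr⟩ := hne
    have hpr : p ≠ r := fun h => hp (h ▸ hr)
    set m' := HasLines.mkLine (P := P) (L := L) hpr with hm'
    obtain ⟨hpm', hrm'⟩ := HasLines.mkLine_ax (P := P) (L := L) hpr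
    have h1 : (incGraph P L).Adj (Sum.inr l) (Sum.inl r) := hr
    have h2 : (incGraph P L).Adj (Sum.inl r) (Sum.inr m') := hrm'
    have h3 : (incGraph P L).Adj (Sum.inr m') (Sum.inl p) := hpm'
    let w : (incGraph P L).Walk (Sum.inr l) (Sum.inl p) :=
      .cons h1 (.cons h2 (.cons h3 .nil))
    have hle : (incGraph P L).dist (Sum.inr l) (Sum.inl p) ≤ 3 :=
      SimpleGraph.dist_le w
    have hreach : (incGraph P L).Reachable (Sum.inr l) (Sum.inl p) := ⟨w⟩
    obtain ⟨w0, hw0⟩ := hreach.exists_walk_length_eq_dist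
    have hpar : ((incGraph P L).dist (Sum.inr l) (Sum.inl p) : ZMod 2) = 1 := by
      rw [← hw0, walk_parity w0]
      simp [side]
    have h0 : (incGraph P L).dist (Sum.inr l) (Sum.inl p) ≠ 0 := by
      intro h; rw [h] at hpar; exact absurd hpar (by decide)
    have hne1 : (incGraph P L).dist (Sum.inr l) (Sum.inl p) ≠ 1 := by
      intro h
      exact hp (SimpleGraph.dist_eq_one_iff_adj.mp h)
    have h2' : (incGraph P L).dist (Sum.inr l) (Sum.inl p) ≠ 2 := by
      intro h; rw [h] at hpar; exact absurd hpar (by decide)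
    omega

/-- every semi-resolving set of a projective plane of order q has size
at least 2q - 1. -/
theorem semiResolvingSet_lower_bound
    {P L : Type*} [Membership P L] [ProjectivePlane P L] [Finite P] [Finite L]
    (S : Set P) (hS : IsSemiResolvingSet P L S) :
    2 * ProjectivePlane.order P L - 1 ≤ S.ncard := by
  classical
  cases nonempty_fintype P
  cases nonempty_fintype L
  haveI : Nonempty L := by
    have h := Configuration.ProjectivePlane.card_lines P L
    exact Fintype.card_pos_iff.mp (by omega)
  set q := ProjectivePlane.order P L with hq
  -- key consequence of being semi-resolving: traces on S distinguish lines
  have key : ∀ l m : L, (∀ p ∈ S, (p ∈ l ↔ p ∈ m)) → l = m := by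
    intro l m h
    apply hS
    intro p hp
    rw [incGraph_dist_eq, incGraph_dist_eq]
    by_cases hpl : p ∈ l
    · rw [if_pos hpl, if_pos ((h p hp).mp hpl)]
    · rw [if_neg hpl, if_neg (fun hm => hpl ((h p hp).mpr hm))]
  set Sf : Finset P := S.toFinset with hSf
  have hScard : S.ncard = Sf.card := by
    rw [hSf, Set.ncard_eq_toFinset_card']
  set tr : L → Finset P := fun l => Sf.filter (fun p => p ∈ l) with htr
  -- total incidence count
  have hsum : ∑ l : L, (tr l).card = Sf.card * (q + 1) := by
    have : ∑ l : L, (tr l).card = ∑ p ∈ Sf, (Finset.univ.filter (fun l : L => p ∈ l)).card := by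
      simp only [htr, Finset.card_filter]
      rw [Finset.sum_comm]
    rw [this]
    have hlc : ∀ p : P, (Finset.univ.filter (fun l : L => p ∈ l)).card = q + 1 := by
      intro p
      have : (Finset.univ.filter (fun l : L => p ∈ l)).card = lineCount L p := by
        rw [lineCount, Nat.card_eq_fintype_card, Fintype.card_subtype]
      rw [this, ProjectivePlane.lineCount_eq]
    rw [Finset.sum_congr rfl (fun p _ => hlc p), Finset.sum_const, smul_eq_mul]
  -- lines with trace of size 0 and 1
  set T0 : Finset L := Finset.univ.filter (fun l => (tr l).card = 0) with hT0
  set T1 : Finset L := Finset.univ.filter (fun l => (tr l).card = 1) with hT1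
  have htrace : ∀ l m : L, tr l = tr m → l = m := by
    intro l m h
    apply key
    intro p hp
    have hp' : p ∈ Sf := by rwa [hSf, Set.mem_toFinset]
    constructor
    · intro hpl
      have : p ∈ tr l := Finset.mem_filter.mpr ⟨hp', hpl⟩
      rw [h] at this
      exact (Finset.mem_filter.mp this).2
    · intro hpm
      have : p ∈ tr m := Finset.mem_filter.mpr ⟨hp', hpm⟩
      rw [← h] at this
      exact (Finset.mem_filter.mp this).2
  have hT0card : T0.card ≤ 1 := by
    apply Finset.card_le_one.mpr
    intro l hl m hm
    apply htrace
    have h1 := (Finset.mem_filter.mp hl).2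
    have h2 := (Finset.mem_filter.mp hm).2
    rw [Finset.card_eq_zero] at h1 h2
    rw [h1, h2]
  have hT1card : T1.card ≤ Sf.card := by
    have hch : ∀ l ∈ T1, ∃ p, tr l = {p} := by
      intro l hl
      exact Finset.card_eq_one.mp (Finset.mem_filter.mp hl).2
    have hPne : Nonempty P := by
      obtain ⟨p0, -⟩ := Configuration.Nondegenerate.exists_point (P := P)
        (Classical.arbitrary L)
      exact ⟨p0⟩
    choose f hf using hch
    apply Finset.card_le_card_of_injOn (fun l => if h : l ∈ T1 then f l h else Classical.arbitrary P)
    · intro l hl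
      simp only [dif_pos hl]
      have : f l hl ∈ tr l := by rw [hf l hl]; exact Finset.mem_singleton_self _
      rw [dif_pos (Finset.mem_coe.mp hl)]; exact (Finset.mem_filter.mp this).1
    · intro l hl m hm h
      simp only [Finset.mem_coe] at hl hm
      simp only [dif_pos hl, dif_pos hm] at h
      apply htrace
      rw [hf l hl, hf m hm, h]
  -- pointwise bound and summation
  have hpt : ∀ l : L, 2 ≤ (tr l).card + ((if (tr l).card = 0 then 2 else 0)
      + (if (tr l).card = 1 then 1 else 0)) := by
    intro l; split_ifs <;> omega
  have hbig : 2 * Fintype.card L ≤ Sf.card * (q + 1) + (2 * T0.card + T1.card) := by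
    calc 2 * Fintype.card L = ∑ _l : L, 2 := by
          rw [Finset.sum_const, Finset.card_univ, smul_eq_mul, mul_comm]
      _ ≤ ∑ l : L, ((tr l).card + ((if (tr l).card = 0 then 2 else 0)
            + (if (tr l).card = 1 then 1 else 0))) := Finset.sum_le_sum (fun l _ => hpt l)
      _ = Sf.card * (q + 1) + (2 * T0.card + T1.card) := by
          rw [Finset.sum_add_distrib, hsum, Finset.sum_add_distrib]
          congr 1
          congr 1
          · rw [← Finset.sum_filter, Finset.sum_const, smul_eq_mul, mul_comm]
          · rw [← Finset.sum_filter, Finset.sum_const, smul_eq_mul, mul_one]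
  rw [Configuration.ProjectivePlane.card_lines P L] at hbig
  have horder : 1 < q := Configuration.ProjectivePlane.one_lt_order P L
  rw [hScard]
  -- 2(q^2+q+1) ≤ Sf.card*(q+1) + 2*1 + Sf.card
  have hfinal : 2 * q * (q + 1) ≤ Sf.card * (q + 2) := by nlinarith [hT0card, hT1card]
  by_contra hcon
  push_neg at hcon
  have hle : Sf.card + 2 ≤ 2 * q := by omega
  have hmul : (Sf.card + 2) * (q + 2) ≤ 2 * q * (q + 2) :=
    Nat.mul_le_mul_right _ hle
  nlinarith [hfinal, hmul]
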